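/- arXiv:2005.03725 — 3 statements merged into one kernel-verified Lean document; each statement's English description precedes it below -/
import Mathlib

section
/- Let X_1,...,X_n be distinct real numbers partitioned into nulls H0 and signals H1 = H0^c, let k ∈ {1,...,n}, ℓ ∈ {1,...,k}, with |H0| ≥ ℓ and |H1| ≥ k - ℓ + 1. If the ℓ-th largest null value strictly exceeds the (k-ℓ+1)-th largest signal value, then the set I = {i : X_i ≥ A_(ℓ)} (where A_(ℓ) is the ℓ-th largest null value) has cardinality at most k and contains exactly ℓ nulls. -/
/-- The `k`-th largest element of a multiset of reals (junk value `0` if out of range). -/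
noncomputable def kthLargest (s : Multiset ℝ) (k : ℕ) : ℝ :=
  (s.sort (· ≤ ·)).getD (Multiset.card s - k) 0

lemma filter_ge_sorted (l : List ℝ) (hsort : l.Pairwise (· ≤ ·)) (hnd : l.Nodup)
    (t : ℕ) (ht : t < l.length) (a : ℝ) (ha : a = l[t]) :
    (l.filter (fun x => decide (a ≤ x))).length = l.length - t := by
  have hlt : l.Pairwise (· < ·) := (hsort.and hnd).imp fun h => lt_of_le_of_ne h.1 h.2
  have hpw := List.pairwise_iff_getElem.mp hlt
  conv_lhs => rw [← List.take_append_drop t l]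
  rw [List.filter_append, List.length_append]
  have h1 : (List.take t l).filter (fun x => decide (a ≤ x)) = [] := by
    rw [List.filter_eq_nil_iff]
    intro x hx
    obtain ⟨i, hi, rfl⟩ := List.getElem_of_mem hx
    have hi' : i < t := by
      have := hi; rw [List.length_take] at this; omega
    rw [List.getElem_take]
    simp only [decide_eq_true_eq, not_le]
    exact ha ▸ hpw i t (by omega) ht hi'
  have h2 : (List.drop t l).filter (fun x => decide (a ≤ x)) = List.drop t l := by
    rw [List.filter_eq_self]
    intro x hx
    obtain ⟨i, hi, rfl⟩ := List.getElem_of_mem hx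
    have hi' : t + i < l.length := by
      have := hi; rw [List.length_drop] at this; omega
    rw [List.getElem_drop]
    simp only [decide_eq_true_eq]
    rcases Nat.eq_zero_or_pos i with h0 | h0
    · subst h0; exact le_of_eq ha
    · exact le_of_lt (ha ▸ hpw t (t + i) ht hi' (by omega))
  rw [h1, h2, List.length_drop]
  simp

lemma filter_gt_sorted (l : List ℝ) (hsort : l.Pairwise (· ≤ ·)) (hnd : l.Nodup)
    (t : ℕ) (ht : t < l.length) (a : ℝ) (ha : a = l[t]) :
    (l.filter (fun x => decide (a < x))).length = l.length - (t + 1) := by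
  have hlt : l.Pairwise (· < ·) := (hsort.and hnd).imp fun h => lt_of_le_of_ne h.1 h.2
  have hpw := List.pairwise_iff_getElem.mp hlt
  conv_lhs => rw [← List.take_append_drop t l]
  rw [List.filter_append, List.length_append]
  have h1 : (List.take t l).filter (fun x => decide (a < x)) = [] := by
    rw [List.filter_eq_nil_iff]
    intro x hx
    obtain ⟨i, hi, rfl⟩ := List.getElem_of_mem hx
    have hi' : i < t := by
      have := hi; rw [List.length_take] at this; omega
    rw [List.getElem_take]
    simp only [decide_eq_true_eq, not_lt]
    exact le_of_lt (ha ▸ hpw i t (by omega) ht hi')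
  have h2 : List.drop t l = l[t] :: List.drop (t + 1) l := List.drop_eq_getElem_cons ht
  have h3 : (List.drop (t + 1) l).filter (fun x => decide (a < x)) = List.drop (t + 1) l := by
    rw [List.filter_eq_self]
    intro x hx
    obtain ⟨i, hi, rfl⟩ := List.getElem_of_mem hx
    have hi' : t + 1 + i < l.length := by
      have := hi; rw [List.length_drop] at this; omega
    rw [List.getElem_drop]
    simp only [decide_eq_true_eq]
    exact ha ▸ hpw t (t + 1 + i) ht hi' (by omega)
  rw [h1, h2, List.filter_cons]
  have hna : ¬ (a < l[t]) := by rw [ha]; exact lt_irrefl _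
  simp [hna, h3, List.length_drop]

lemma kth_filter (s : Multiset ℝ) (hs : s.Nodup) (j : ℕ) (hj1 : 1 ≤ j)
    (hjm : j ≤ Multiset.card s) :
    Multiset.card (s.filter (fun x => kthLargest s j ≤ x)) = j ∧
      Multiset.card (s.filter (fun x => kthLargest s j < x)) = j - 1 := by
  set A := kthLargest s j with hA
  set l := s.sort (· ≤ ·) with hl
  have hcoe : (↑l : Multiset ℝ) = s := Multiset.sort_eq s _
  have hlen : l.length = Multiset.card s := by rw [← hcoe]; simp
  have hnd : l.Nodup := by rw [← Multiset.coe_nodup, hcoe]; exact hs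
  have hsort : l.Pairwise (· ≤ ·) := Multiset.pairwise_sort s _
  have ht : Multiset.card s - j < l.length := by omega
  have ha : A = l[Multiset.card s - j] := by
    rw [hA]
    exact List.getD_eq_getElem l 0 ht
  constructor
  · rw [← hcoe, Multiset.filter_coe, Multiset.coe_card,
      filter_ge_sorted l hsort hnd _ ht A ha, hlen]
    omega
  · rw [← hcoe, Multiset.filter_coe, Multiset.coe_card,
      filter_gt_sorted l hsort hnd _ ht A ha, hlen]
    omega

lemma card_filter_comp {n : ℕ} (X : Fin n → ℝ) (S : Finset (Fin n))
    (p : ℝ → Prop) [DecidablePred p] :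
    (S.filter (fun i => p (X i))).card = Multiset.card ((S.val.map X).filter p) := by
  rw [Multiset.filter_map, Multiset.card_map]
  rfl

/-- If the `ℓ`-th largest null value strictly exceeds the `(k-ℓ+1)`-th largest signal value,
then the set `I = {i : X i ≥ A_(ℓ)}` has cardinality at most `k` and contains exactly `ℓ`
nulls. -/
theorem top_set_card_and_null_count {n : ℕ} (X : Fin n → ℝ)
    (hX : Function.Injective X) (H0 : Finset (Fin n)) (k ℓ : ℕ)
    (hk1 : 1 ≤ k) (hkn : k ≤ n) (hℓ1 : 1 ≤ ℓ) (hℓk : ℓ ≤ k)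
    (hH0 : ℓ ≤ H0.card) (hH1 : k - ℓ + 1 ≤ H0ᶜ.card)
    (hcmp : kthLargest (H0ᶜ.val.map X) (k - ℓ + 1) < kthLargest (H0.val.map X) ℓ) :
    (Finset.univ.filter (fun i => kthLargest (H0.val.map X) ℓ ≤ X i)).card ≤ k ∧
      ((Finset.univ.filter (fun i => kthLargest (H0.val.map X) ℓ ≤ X i)) ∩ H0).card = ℓ := by
  classical
  set A := kthLargest (H0.val.map X) ℓ with hA
  set B := kthLargest (H0ᶜ.val.map X) (k - ℓ + 1) with hB
  have hnd0 : (H0.val.map X).Nodup := H0.nodup.map hX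
  have hnd1 : (H0ᶜ.val.map X).Nodup := H0ᶜ.nodup.map hX
  have hcard0 : Multiset.card (H0.val.map X) = H0.card := by rw [Multiset.card_map]; rfl
  have hcard1 : Multiset.card (H0ᶜ.val.map X) = H0ᶜ.card := by rw [Multiset.card_map]; rfl
  -- exactly ℓ nulls satisfy A ≤ X i
  have h0 : (H0.filter (fun i => A ≤ X i)).card = ℓ := by
    rw [card_filter_comp]
    exact (kth_filter (H0.val.map X) hnd0 ℓ hℓ1 (by omega)).1
  -- at most k - ℓ signals satisfy A ≤ X i
  have h1 : (H0ᶜ.filter (fun i => A ≤ X i)).card ≤ k - ℓ := by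
    have hsub : H0ᶜ.filter (fun i => A ≤ X i) ⊆ H0ᶜ.filter (fun i => B < X i) := by
      intro i hi
      simp only [Finset.mem_filter] at hi ⊢
      exact ⟨hi.1, lt_of_lt_of_le hcmp hi.2⟩
    have hgt : (H0ᶜ.filter (fun i => B < X i)).card = k - ℓ := by
      rw [card_filter_comp]
      have := (kth_filter (H0ᶜ.val.map X) hnd1 (k - ℓ + 1) (by omega) (by omega)).2
      simpa using this
    calc (H0ᶜ.filter (fun i => A ≤ X i)).card ≤ (H0ᶜ.filter (fun i => B < X i)).card :=
          Finset.card_le_card hsub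
      _ = k - ℓ := hgt
  have hinter : (Finset.univ.filter (fun i => A ≤ X i)) ∩ H0
      = H0.filter (fun i => A ≤ X i) := by
    ext i
    simp only [Finset.mem_inter, Finset.mem_filter, Finset.mem_univ, true_and]
    exact and_comm
  have hinterc : (Finset.univ.filter (fun i => A ≤ X i)) ∩ H0ᶜ
      = H0ᶜ.filter (fun i => A ≤ X i) := by
    ext i
    simp only [Finset.mem_inter, Finset.mem_filter, Finset.mem_univ, true_and,
      Finset.mem_compl]
    exact and_comm
  have hsplit : (Finset.univ.filter (fun i => A ≤ X i)).card
      = (H0.filter (fun i => A ≤ X i)).card + (H0ᶜ.filter (fun i => A ≤ X i)).card := by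
    rw [← hinter, ← hinterc,
      ← Finset.card_filter_add_card_filter_not
        (s := Finset.univ.filter (fun i => A ≤ X i)) (· ∈ H0)]
    congr 1
    all_goals
      congr 1
      ext i
      simp only [Finset.mem_inter, Finset.mem_filter, Finset.mem_univ, true_and,
        Finset.mem_compl]
      try tauto
  constructor
  · rw [hsplit, h0]; omega
  · rw [hinter, h0]
end

section
/- Let V₁,...,V_n be i.i.d. standard exponential random variables, ℓ ≥ 1 an integer, and ε ∈ (0,1). Then P[V_(ℓ+1) ≤ log((n/ℓ)·(1 + 4·log(3/ε))^{-1})] ≤ ε/3, where V_(ℓ+1) is the (ℓ+1)-th largest value. -/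
open MeasureTheory ProbabilityTheory
open scoped Nat

-- ℓ! ≤ k! * ℓ^(ℓ-k) for k ≤ ℓ
lemma fact_le_fact_mul_pow {k l : ℕ} (h : k ≤ l) : l ! ≤ k ! * l ^ (l - k) := by
  induction l with
  | zero => interval_cases k; simp
  | succ m ih =>
    rcases Nat.eq_or_lt_of_le h with rfl | hlt
    · simp
    · have hk : k ≤ m := Nat.lt_succ_iff.mp hlt
      calc (m+1)! = (m+1) * m ! := rfl
        _ ≤ (m+1) * (k ! * m ^ (m - k)) := Nat.mul_le_mul_left _ (ih hk)
        _ ≤ (m+1) * (k ! * (m+1) ^ (m - k)) := by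
            exact Nat.mul_le_mul_left _ (Nat.mul_le_mul_left _ (Nat.pow_le_pow_left (Nat.le_succ m) _))
        _ = k ! * ((m+1) ^ (m-k) * (m+1)) := by ring
        _ = k ! * (m+1) ^ (m - k + 1) := by rw [pow_succ]
        _ = k ! * (m+1) ^ (m + 1 - k) := by rw [Nat.sub_add_comm hk]

-- ℓ^ℓ ≤ ℓ! * e^ℓ
lemma pow_le_factorial_mul_exp (l : ℕ) : (l:ℝ) ^ l ≤ (l ! : ℝ) * Real.exp 1 ^ l := by
  induction l with
  | zero => simp
  | succ m ih =>
    have hm1 : (0:ℝ) < (m:ℝ) + 1 := by positivity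
    have key : ((m:ℝ)+1) ^ m ≤ (m:ℝ) ^ m * Real.exp 1 := by
      rcases Nat.eq_zero_or_pos m with rfl | hm
      · simpa using Real.one_le_exp (by norm_num : (0:ℝ) ≤ 1)
      · have hmp : (0:ℝ) < m := by exact_mod_cast hm
        have h1 : ((m:ℝ)+1) ^ m = (m:ℝ)^m * (1 + 1/m) ^ m := by
          rw [← mul_pow]; congr 1; field_simp
        have h2 : (1 + 1/(m:ℝ)) ^ m ≤ Real.exp 1 := by
          have := Real.add_one_le_exp (1/(m:ℝ))
          calc (1 + 1/(m:ℝ)) ^ m ≤ Real.exp (1/m) ^ m := by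
                apply pow_le_pow_left₀ (by positivity) (by linarith) 
            _ = Real.exp (1/m * m) := by rw [← Real.exp_nat_mul]; ring_nf
            _ = Real.exp 1 := by rw [div_mul_cancel₀]; positivity
        calc ((m:ℝ)+1) ^ m = (m:ℝ)^m * (1+1/m)^m := h1
          _ ≤ (m:ℝ)^m * Real.exp 1 := by
              apply mul_le_mul_of_nonneg_left h2 (by positivity)
    push_cast
    calc ((m:ℝ)+1) ^ (m+1) = ((m:ℝ)+1) * ((m:ℝ)+1)^m := by ring
      _ ≤ ((m:ℝ)+1) * ((m:ℝ)^m * Real.exp 1) :=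
          mul_le_mul_of_nonneg_left key hm1.le
      _ ≤ ((m:ℝ)+1) * (((m ! : ℝ) * Real.exp 1 ^ m) * Real.exp 1) := by
          have h0 : (0:ℝ) < Real.exp 1 := Real.exp_pos 1
          apply mul_le_mul_of_nonneg_left _ hm1.le
          exact mul_le_mul_of_nonneg_right ih h0.le
      _ = ((m+1)! : ℝ) * Real.exp 1 ^ (m+1) := by
          push_cast [Nat.factorial_succ]; ring

lemma core_sum_bound (n l : ℕ) (hl : 1 ≤ l) (hn : l + 1 ≤ n) (L : ℝ) (hL : 1 ≤ L)
    (p : ℝ) (hp : p = l * (1 + 4*L) / n) (hp1 : p ≤ 1) :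
    ∑ k ∈ Finset.range (l+1), (n.choose k : ℝ) * p^k * (1-p)^(n-k) ≤ Real.exp (-L) := by
  have hnpos : (0:ℝ) < n := by exact_mod_cast (by omega : 0 < n)
  have hlpos : (0:ℝ) < l := by exact_mod_cast hl
  have he : (2.7182818283:ℝ) < Real.exp 1 := Real.exp_one_gt_d9
  have hepos : (0:ℝ) < Real.exp 1 := Real.exp_pos 1
  obtain ⟨A, hA⟩ : ∃ A:ℝ, A = 1 + 4*L := ⟨_, rfl⟩
  have hA5 : (5:ℝ) ≤ A := by rw [hA]; linarith
  have hApos : (0:ℝ) < A := by linarith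
  obtain ⟨m, hm⟩ : ∃ m:ℝ, m = l * A := ⟨_, rfl⟩
  have hmpos : (0:ℝ) < m := hm ▸ mul_pos hlpos hApos
  have hnp : (n:ℝ) * p = m := by rw [hp, hm, hA]; field_simp
  have hp0 : 0 ≤ p := by rw [hp]; positivity
  -- step 1: termwise bound
  have step1 : ∀ k ∈ Finset.range (l+1),
      (n.choose k : ℝ) * p^k * (1-p)^(n-k) ≤
        (m * Real.exp 1)^k / (k ! : ℝ) * Real.exp (-m) := by
    intro k hk
    have hkl : k ≤ l := Nat.lt_succ_iff.mp (Finset.mem_range.mp hk)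
    have hkn : k ≤ n := hkl.trans (by omega)
    have h1p : (1-p)^(n-k) ≤ Real.exp (-m) * Real.exp (p*k) := by
      calc (1-p)^(n-k) ≤ Real.exp (-p) ^ (n-k) := by
            apply pow_le_pow_left₀ (by linarith)
            linarith [Real.add_one_le_exp (-p)]
        _ = Real.exp (-(p * (n-k:ℕ))) := by
            rw [← Real.exp_nat_mul]; ring_nf
        _ = Real.exp (-m) * Real.exp (p*k) := by
            rw [← Real.exp_add]
            congr 1
            rw [Nat.cast_sub hkn]
            rw [← hnp]; ring
      -- end
    have hchoose : (n.choose k : ℝ) ≤ (n:ℝ)^k / (k ! : ℝ) := Nat.choose_le_pow_div k n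
    have hfactpos : (0:ℝ) < (k ! : ℝ) := by exact_mod_cast k.factorial_pos
    have hexppk : Real.exp (p*k) ≤ Real.exp 1 ^ k := by
      rw [← Real.exp_nat_mul]
      apply Real.exp_le_exp.mpr
      have : (0:ℝ) ≤ (k:ℝ) := Nat.cast_nonneg k
      nlinarith
    calc (n.choose k : ℝ) * p^k * (1-p)^(n-k)
        ≤ ((n:ℝ)^k / (k ! : ℝ)) * p^k * (Real.exp (-m) * Real.exp (p*k)) := by
          apply mul_le_mul (mul_le_mul_of_nonneg_right hchoose (by positivity)) h1p
            (pow_nonneg (by linarith) _) (by positivity)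
      _ = (((n:ℝ)*p)^k * Real.exp (p*k)) / (k ! : ℝ) * Real.exp (-m) := by
          rw [mul_pow]; ring
      _ ≤ (m * Real.exp 1)^k / (k ! : ℝ) * Real.exp (-m) := by
          rw [hnp, mul_pow]
          apply mul_le_mul_of_nonneg_right _ (Real.exp_pos (-m)).le
          rw [div_le_div_iff_of_pos_right hfactpos]
          exact mul_le_mul_of_nonneg_left hexppk (pow_nonneg hmpos.le k)
  obtain ⟨E, hE⟩ : ∃ E:ℝ, E = m * Real.exp 1 := ⟨_, rfl⟩
  have hEpos : (0:ℝ) < E := hE ▸ mul_pos hmpos hepos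
  have hE10 : 10 * (l:ℝ) ≤ E := by
    rw [hE, hm]
    nlinarith [mul_pos hlpos hApos]
  have hflpos : (0:ℝ) < (l ! : ℝ) := by exact_mod_cast l.factorial_pos
  -- step 2 : per-term geometric comparison
  have step2 : ∀ k ∈ Finset.range (l+1),
      E^k / (k ! : ℝ) ≤ ((1/10:ℝ)^(l-k) * E^l) / (l ! : ℝ) := by
    intro k hk
    have hkl : k ≤ l := Nat.lt_succ_iff.mp (Finset.mem_range.mp hk)
    have hfkpos : (0:ℝ) < (k ! : ℝ) := by exact_mod_cast k.factorial_pos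
    rw [div_le_div_iff₀ hfkpos hflpos]
    have key : (l ! : ℝ) * 10^(l-k) ≤ (k ! : ℝ) * E^(l-k) := by
      calc (l ! : ℝ) * 10^(l-k) ≤ ((k ! : ℝ) * (l:ℝ)^(l-k)) * 10^(l-k) := by
            have := fact_le_fact_mul_pow hkl
            have hcast : (l ! : ℝ) ≤ (k ! : ℝ) * (l:ℝ)^(l-k) := by exact_mod_cast this
            apply mul_le_mul_of_nonneg_right hcast (by positivity)
        _ = (k ! : ℝ) * (10 * (l:ℝ))^(l-k) := by rw [mul_pow]; ring
        _ ≤ (k ! : ℝ) * E^(l-k) := by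
            apply mul_le_mul_of_nonneg_left _ hfkpos.le
            exact pow_le_pow_left₀ (by positivity) hE10 _
    have hten : ((1/10:ℝ))^(l-k) * 10^(l-k) = 1 := by
      rw [← mul_pow]; norm_num
    calc E^k * (l ! : ℝ) = (E^k * ((l ! : ℝ) * 10^(l-k))) * (1/10:ℝ)^(l-k) := by
          rw [mul_comm ((1/10:ℝ)^(l-k))] at hten
          rw [mul_assoc, mul_assoc, hten, mul_one]
      _ ≤ (E^k * ((k ! : ℝ) * E^(l-k))) * (1/10:ℝ)^(l-k) := by
          apply mul_le_mul_of_nonneg_right _ (by positivity)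
          exact mul_le_mul_of_nonneg_left key (by positivity)
      _ = (1/10:ℝ)^(l-k) * E^l * (k ! : ℝ) := by
          rw [show E^k * ((k ! : ℝ) * E^(l-k)) = E^(k + (l-k)) * (k ! : ℝ) by
            rw [pow_add]; ring]
          rw [Nat.add_sub_cancel' hkl]
          ring
  have hgeom : ∑ k ∈ Finset.range (l+1), ((1/10:ℝ))^(l-k) ≤ 10/9 := by
    have hrefl := Finset.sum_range_reflect (fun j => ((1/10:ℝ))^j) (l+1)
    simp only [Nat.add_sub_cancel] at hrefl
    rw [hrefl, geom_sum_eq (by norm_num : (1/10:ℝ) ≠ 1)]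
    have hx0 : (0:ℝ) ≤ (1/10:ℝ)^(l+1) := by positivity
    have heq : ((1/10:ℝ)^(l+1) - 1)/((1/10:ℝ)-1) = (1 - (1/10:ℝ)^(l+1)) * (10/9) := by
      ring
    rw [heq]; nlinarith
  have hsum2 : ∑ k ∈ Finset.range (l+1), E^k / (k ! : ℝ) ≤ (10/9) * (E^l / (l ! : ℝ)) := by
    calc ∑ k ∈ Finset.range (l+1), E^k / (k ! : ℝ)
        ≤ ∑ k ∈ Finset.range (l+1), ((1/10:ℝ)^(l-k) * E^l) / (l ! : ℝ) :=
          Finset.sum_le_sum step2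
      _ = (∑ k ∈ Finset.range (l+1), (1/10:ℝ)^(l-k)) * (E^l / (l ! : ℝ)) := by
          rw [Finset.sum_mul]
          apply Finset.sum_congr rfl
          intro k _; ring
      _ ≤ (10/9) * (E^l / (l ! : ℝ)) := by
          apply mul_le_mul_of_nonneg_right hgeom (by positivity)
  have h4 : E^l / (l ! : ℝ) ≤ (A * Real.exp 1 ^ 2)^l := by
    have h40 : E^l = (l:ℝ)^l * (A * Real.exp 1)^l := by
      rw [hE, hm, mul_assoc, mul_pow]
    rw [h40, div_le_iff₀ hflpos]
    calc (l:ℝ)^l * (A * Real.exp 1)^l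
        ≤ ((l ! : ℝ) * Real.exp 1 ^ l) * (A * Real.exp 1)^l := by
          apply mul_le_mul_of_nonneg_right (pow_le_factorial_mul_exp l) (by positivity)
      _ = (A * Real.exp 1 ^ 2)^l * (l ! : ℝ) := by
          rw [mul_pow, mul_pow]; ring
  have hlogA : A ≤ Real.exp (A / Real.exp 1) := by
    have h := Real.log_le_sub_one_of_pos (show (0:ℝ) < A / Real.exp 1 by positivity)
    rw [Real.log_div hApos.ne' hepos.ne', Real.log_exp] at h
    calc A = Real.exp (Real.log A) := (Real.exp_log hApos).symm
      _ ≤ Real.exp (A / Real.exp 1) := Real.exp_le_exp.mpr (by linarith)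
  have hexp2 : Real.exp 1 ^ 2 = Real.exp 2 := by
    rw [← Real.exp_nat_mul]; norm_num
  have hAe2 : (A * Real.exp 1 ^ 2)^l ≤ Real.exp ((l:ℝ) * (A / Real.exp 1 + 2)) := by
    calc (A * Real.exp 1 ^ 2)^l ≤ (Real.exp (A / Real.exp 1) * Real.exp 2)^l := by
          rw [hexp2]
          exact pow_le_pow_left₀ (by positivity)
            (mul_le_mul_of_nonneg_right hlogA (Real.exp_pos 2).le) _
      _ = Real.exp ((l:ℝ) * (A / Real.exp 1 + 2)) := by
          rw [← Real.exp_add, ← Real.exp_nat_mul]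
  have h109 : (10/9:ℝ) ≤ Real.exp (1/9) := by
    have := Real.add_one_le_exp (1/9:ℝ); linarith
  have hl1 : (1:ℝ) ≤ (l:ℝ) := by exact_mod_cast hl
  have hc : L + 1/9 ≤ A - A / Real.exp 1 - 2 := by
    have hAd : A / Real.exp 1 ≤ A * (10000000000/27182818283 : ℝ) := by
      rw [div_eq_mul_inv]
      apply mul_le_mul_of_nonneg_left _ hApos.le
      rw [show (10000000000/27182818283:ℝ) = (27182818283/10000000000:ℝ)⁻¹ by norm_num]
      exact inv_anti₀ (by norm_num) (by rw [show (27182818283/10000000000:ℝ) = 2.7182818283 by norm_num]; exact he.le)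
    rw [hA] at hAd ⊢
    linarith
  have hc0 : 0 ≤ A - A / Real.exp 1 - 2 := by linarith
  have hlc : L + 1/9 ≤ (l:ℝ) * (A - A / Real.exp 1 - 2) := by
    have h1 : 1 * (A - A / Real.exp 1 - 2) ≤ (l:ℝ) * (A - A / Real.exp 1 - 2) :=
      mul_le_mul_of_nonneg_right hl1 hc0
    linarith
  have hfinal : 1/9 + (l:ℝ) * (A / Real.exp 1 + 2) + -m ≤ -L := by
    rw [hm]
    have hexpand : (l:ℝ)*(A - A/Real.exp 1 - 2) = l*A - l*(A/Real.exp 1) - 2*l := by ring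
    have hexpand2 : (l:ℝ)*(A/Real.exp 1 + 2) = l*(A/Real.exp 1) + 2*l := by ring
    linarith
  calc ∑ k ∈ Finset.range (l+1), (n.choose k : ℝ) * p^k * (1-p)^(n-k)
      ≤ ∑ k ∈ Finset.range (l+1), (m * Real.exp 1)^k / (k ! : ℝ) * Real.exp (-m) :=
        Finset.sum_le_sum step1
    _ = (∑ k ∈ Finset.range (l+1), E^k / (k ! : ℝ)) * Real.exp (-m) := by
        rw [Finset.sum_mul, hE]
    _ ≤ ((10/9) * (E^l / (l ! : ℝ))) * Real.exp (-m) :=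
        mul_le_mul_of_nonneg_right hsum2 (Real.exp_pos _).le
    _ ≤ ((10/9) * (A * Real.exp 1 ^ 2)^l) * Real.exp (-m) := by
        apply mul_le_mul_of_nonneg_right _ (Real.exp_pos _).le
        exact mul_le_mul_of_nonneg_left h4 (by norm_num)
    _ ≤ (Real.exp (1/9) * Real.exp ((l:ℝ) * (A / Real.exp 1 + 2))) * Real.exp (-m) := by
        apply mul_le_mul_of_nonneg_right _ (Real.exp_pos _).le
        exact mul_le_mul h109 hAe2 (by positivity) (Real.exp_pos _).le
    _ = Real.exp (1/9 + (l:ℝ) * (A / Real.exp 1 + 2) + -m) := by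
        rw [← Real.exp_add, ← Real.exp_add]
    _ ≤ Real.exp (-L) := Real.exp_le_exp.mpr hfinal

-- If the (j)-indexed element of a sorted list is ≤ t, then at most (length - (j+1)) elements are > t
lemma sorted_filter_gt_le {l : List ℝ} (hs : l.Pairwise (· ≤ ·)) {j : ℕ} (hj : j < l.length)
    {t : ℝ} (ht : l.getD j 0 ≤ t) :
    (l.filter (fun x => decide (t < x))).length ≤ l.length - (j+1) := by
  have htake : ∀ x ∈ l.take (j+1), x ≤ t := by
    intro x hx
    rw [List.mem_take_iff_getElem] at hx
    obtain ⟨i, hi, rfl⟩ := hx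
    have hil : i < l.length := by
      have := hi.trans_le (min_le_right _ _); simpa using this
    have hij : i ≤ j := by
      have := hi.trans_le (min_le_left _ _); omega
    have : l.get ⟨i, hil⟩ ≤ l.get ⟨j, hj⟩ :=
      hs.rel_get_of_le (by simpa using hij)
    simp only [List.get_eq_getElem] at this
    rw [List.getD_eq_getElem l 0 hj] at ht
    linarith
  have hsplit : l = l.take (j+1) ++ l.drop (j+1) := (List.take_append_drop _ _).symm
  have hfiltake : (l.take (j+1)).filter (fun x => decide (t < x)) = [] := by
    rw [List.filter_eq_nil_iff]
    intro a ha
    simpa using not_lt.mpr (htake a ha)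
  calc (l.filter (fun x => decide (t < x))).length
      = ((l.take (j+1)).filter (fun x => decide (t < x))).length
        + ((l.drop (j+1)).filter (fun x => decide (t < x))).length := by
        conv_lhs => rw [hsplit]
        rw [List.filter_append, List.length_append]
    _ = ((l.drop (j+1)).filter (fun x => decide (t < x))).length := by
        rw [hfiltake]; simp
    _ ≤ (l.drop (j+1)).length := List.length_filter_le _ _
    _ = l.length - (j+1) := List.length_drop

lemma filter_card_le_of_kthLargest_le {s : Multiset ℝ} {l : ℕ} (hln : l + 1 ≤ Multiset.card s)
    {t : ℝ} (h : kthLargest s (l+1) ≤ t) :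
    Multiset.card (s.filter (fun x => t < x)) ≤ l := by
  have hlen : (s.sort (· ≤ ·)).length = Multiset.card s := Multiset.length_sort _
  have hsorted : (s.sort (· ≤ ·)).Pairwise (· ≤ ·) := Multiset.pairwise_sort _ _
  have hj : Multiset.card s - (l+1) < (s.sort (· ≤ ·)).length := by omega
  have hfil := sorted_filter_gt_le hsorted hj (t := t) h
  have hcoe : s = ((s.sort (· ≤ ·)) : Multiset ℝ) := (Multiset.sort_eq _ _).symm
  calc Multiset.card (s.filter (fun x => t < x))
      = ((s.sort (· ≤ ·)).filter (fun x => decide (t < x))).length := by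
        conv_lhs => rw [← Multiset.sort_eq s (· ≤ ·)]
        rw [Multiset.filter_coe, Multiset.coe_card]
    _ ≤ (s.sort (· ≤ ·)).length - (Multiset.card s - (l+1) + 1) := hfil
    _ ≤ l := by omega

/-- For i.i.d. standard exponentials, `ℓ ≥ 1` and `ε ∈ (0,1)`:
`P[V_(ℓ+1) ≤ log((n/ℓ)·(1 + 4 log(3/ε))⁻¹)] ≤ ε/3`. -/
theorem exponential_order_stat_eps_bound {Ω : Type*} [MeasurableSpace Ω]
    (μ : Measure Ω) [IsProbabilityMeasure μ] {n : ℕ}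
    (V : Fin n → Ω → ℝ) (hVmeas : ∀ i, Measurable (V i))
    (hindep : iIndepFun V μ)
    (hexp : ∀ i, μ.map (V i) = expMeasure 1)
    (ℓ : ℕ) (hℓ : 1 ≤ ℓ) (hℓn : ℓ + 1 ≤ n) (ε : ℝ) (hε : ε ∈ Set.Ioo (0:ℝ) 1) :
    μ {ω | kthLargest (Finset.univ.val.map fun i => V i ω) (ℓ + 1) ≤
        Real.log (((n : ℝ) / ℓ) * (1 + 4 * Real.log (3 / ε))⁻¹)} ≤
      ENNReal.ofReal (ε / 3) := by
  obtain ⟨hε0, hε1⟩ := hε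
  have hl0 : (0:ℝ) < ℓ := by exact_mod_cast hℓ
  have hn0 : (0:ℝ) < n := by exact_mod_cast (by omega : 0 < n)
  have hL1 : (1:ℝ) ≤ Real.log (3/ε) := by
    rw [Real.le_log_iff_exp_le (by positivity)]
    have h3 : Real.exp 1 ≤ 3 := by nlinarith [Real.exp_one_lt_d9]
    calc Real.exp 1 ≤ 3 := h3
      _ ≤ 3/ε := by rw [le_div_iff₀ hε0]; nlinarith
  obtain ⟨L, hLdef⟩ : ∃ L:ℝ, L = Real.log (3/ε) := ⟨_, rfl⟩
  rw [← hLdef] at hL1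
  obtain ⟨x, hxdef⟩ : ∃ x:ℝ, x = ((n : ℝ) / ℓ) * (1 + 4 * L)⁻¹ := ⟨_, rfl⟩
  have hxpos : 0 < x := by rw [hxdef]; have : (0:ℝ) < 1 + 4*L := by linarith
                           positivity
  obtain ⟨t, htdef⟩ : ∃ t:ℝ, t = Real.log x := ⟨_, rfl⟩
  have hgoalrw : {ω | kthLargest (Finset.univ.val.map fun i => V i ω) (ℓ + 1) ≤
        Real.log (((n : ℝ) / ℓ) * (1 + 4 * Real.log (3 / ε))⁻¹)}
      = {ω | kthLargest (Finset.univ.val.map fun i => V i ω) (ℓ + 1) ≤ t} := by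
    rw [htdef, hxdef, hLdef]
  rw [hgoalrw]
  haveI : IsProbabilityMeasure (expMeasure 1) := isProbabilityMeasure_expMeasure one_pos
  -- CDF values
  have hIic : expMeasure 1 (Set.Iic t) =
      ENNReal.ofReal (if 0 ≤ t then 1 - Real.exp (-t) else 0) := by
    rw [← ofReal_cdf (expMeasure 1) t]
    congr 1
    have h1 := cdf_expMeasure_eq one_pos t
    rw [h1]
    norm_num
  -- the union over small subsets
  classical
  set B : Finset (Fin n) → Fin n → Set ℝ :=
    fun S i => if i ∈ S then Set.Ioi t else Set.Iic t with hB
  have hBmeas : ∀ S i, MeasurableSet (B S i) := by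
    intro S i; rw [hB]; dsimp only; split_ifs
    exacts [measurableSet_Ioi, measurableSet_Iic]
  set 𝒮 : Finset (Finset (Fin n)) := Finset.univ.filter (fun S => S.card ≤ ℓ) with h𝒮
  have hsub : {ω | kthLargest (Finset.univ.val.map fun i => V i ω) (ℓ + 1) ≤ t}
      ⊆ ⋃ S ∈ 𝒮, ⋂ i, V i ⁻¹' B S i := by
    intro ω hω
    simp only [Set.mem_setOf_eq] at hω
    have hcards : Multiset.card (Finset.univ.val.map fun i => V i ω) = n := by simp
    have hfil := filter_card_le_of_kthLargest_le (by rw [hcards]; exact hℓn) hω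
    have hcard : (Finset.univ.filter (fun i => t < V i ω)).card ≤ ℓ := by
      rw [Multiset.filter_map, Multiset.card_map] at hfil
      exact hfil
    refine Set.mem_iUnion₂.mpr ⟨Finset.univ.filter (fun j => t < V j ω),
      Finset.mem_filter.mpr ⟨Finset.mem_univ _, hcard⟩, ?_⟩
    refine Set.mem_iInter.mpr fun i => ?_
    rw [Set.mem_preimage, hB]
    dsimp only
    by_cases hi : i ∈ Finset.univ.filter (fun j => t < V j ω)
    · rw [if_pos hi]
      exact (Finset.mem_filter.mp hi).2
    · rw [if_neg hi]
      simp only [Finset.mem_filter, Finset.mem_univ, true_and, not_lt] at hi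
      exact hi
  -- independence product
  have hprod : ∀ S : Finset (Fin n), μ (⋂ i, V i ⁻¹' B S i) =
      (expMeasure 1 (Set.Ioi t))^S.card * (expMeasure 1 (Set.Iic t))^(n - S.card) := by
    intro S
    rw [hindep.meas_iInter (fun i => ⟨B S i, hBmeas S i, rfl⟩)]
    have hmap : ∀ i, μ (V i ⁻¹' B S i) = expMeasure 1 (B S i) := by
      intro i
      rw [← hexp i, Measure.map_apply (hVmeas i) (hBmeas S i)]
    calc ∏ i, μ (V i ⁻¹' B S i) = ∏ i, expMeasure 1 (B S i) :=
          Finset.prod_congr rfl (fun i _ => hmap i)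
      _ = ∏ i, (if i ∈ S then expMeasure 1 (Set.Ioi t) else expMeasure 1 (Set.Iic t)) := by
          apply Finset.prod_congr rfl
          intro i _
          rw [hB]; dsimp only; split_ifs <;> rfl
      _ = (expMeasure 1 (Set.Ioi t))^S.card * (expMeasure 1 (Set.Iic t))^(n - S.card) := by
          rw [Finset.prod_ite, Finset.prod_const, Finset.prod_const,
            Finset.filter_univ_mem]
          congr 1
          have : (Finset.univ.filter (fun i => ¬ i ∈ S)) = Sᶜ := by
            ext i; simp
          rw [this, Finset.card_compl, Fintype.card_fin]
  obtain ⟨P, hP⟩ : ∃ P, P = expMeasure 1 (Set.Ioi t) := ⟨_, rfl⟩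
  obtain ⟨Q, hQ⟩ : ∃ Q, Q = expMeasure 1 (Set.Iic t) := ⟨_, rfl⟩
  have hstep : μ {ω | kthLargest (Finset.univ.val.map fun i => V i ω) (ℓ + 1) ≤ t}
      ≤ ∑ k ∈ Finset.range (ℓ+1), (n.choose k) • (P^k * Q^(n-k)) := by
    calc μ {ω | kthLargest (Finset.univ.val.map fun i => V i ω) (ℓ + 1) ≤ t}
        ≤ μ (⋃ S ∈ 𝒮, ⋂ i, V i ⁻¹' B S i) := measure_mono hsub
      _ ≤ ∑ S ∈ 𝒮, μ (⋂ i, V i ⁻¹' B S i) := measure_biUnion_finset_le _ _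
      _ = ∑ S ∈ 𝒮, (P^S.card * Q^(n - S.card)) :=
          Finset.sum_congr rfl (fun S _ => by rw [hprod S, hP, hQ])
      _ = ∑ k ∈ 𝒮.image Finset.card,
            (𝒮.filter (fun S => S.card = k)).card • (P^k * Q^(n-k)) := by
          rw [Finset.sum_comp (fun k => P^k * Q^(n-k)) Finset.card]
      _ ≤ ∑ k ∈ Finset.range (ℓ+1),
            (𝒮.filter (fun S => S.card = k)).card • (P^k * Q^(n-k)) := by
          apply Finset.sum_le_sum_of_subset
          intro k hk
          rw [Finset.mem_image] at hk
          obtain ⟨S, hS, rfl⟩ := hk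
          rw [Finset.mem_range]
          have := (Finset.mem_filter.mp hS).2
          omega
      _ ≤ ∑ k ∈ Finset.range (ℓ+1), (n.choose k) • (P^k * Q^(n-k)) := by
          apply Finset.sum_le_sum
          intro k _
          have h1 : (𝒮.filter (fun S => S.card = k)).card ≤ n.choose k := by
            have hsub1 : 𝒮.filter (fun S => S.card = k) ⊆
                Finset.univ.filter (fun S : Finset (Fin n) => S.card = k) :=
              Finset.filter_subset_filter _ (Finset.filter_subset _ _)
            have h2 : (Finset.univ.filter (fun S : Finset (Fin n) => S.card = k))
                = Finset.powersetCard k Finset.univ := by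
              rw [Finset.powersetCard_eq_filter, Finset.powerset_univ]
            calc (𝒮.filter (fun S => S.card = k)).card
                ≤ (Finset.univ.filter (fun S : Finset (Fin n) => S.card = k)).card :=
                  Finset.card_le_card hsub1
              _ = n.choose k := by
                  rw [h2, Finset.card_powersetCard, Finset.card_univ, Fintype.card_fin]
          simp only [nsmul_eq_mul]
          exact mul_le_mul_left (by exact_mod_cast Nat.cast_le.mpr h1) _
  refine hstep.trans ?_
  by_cases hx1 : 1 ≤ x
  · -- t ≥ 0
    have ht0 : 0 ≤ t := htdef ▸ Real.log_nonneg hx1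
    have hprx : Real.exp (-t) = x⁻¹ := by rw [htdef, Real.exp_neg, Real.exp_log hxpos]
    have h4L : (0:ℝ) < 1 + 4*L := by linarith
    have hpr_eq : Real.exp (-t) = ↑ℓ * (1 + 4*L) / ↑n := by
      rw [hprx, hxdef]
      field_simp
    have hpr1 : Real.exp (-t) ≤ 1 := by
      rw [hprx]
      exact inv_le_one_of_one_le₀ hx1
    have hpr0 : (0:ℝ) < Real.exp (-t) := Real.exp_pos _
    have hQval : Q = ENNReal.ofReal (1 - Real.exp (-t)) := by
      rw [hQ, hIic, if_pos ht0]
    have hPval : P = ENNReal.ofReal (Real.exp (-t)) := by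
      have hcompl : Set.Ioi t = (Set.Iic t)ᶜ := by simp
      rw [hP, hcompl, measure_compl measurableSet_Iic (measure_ne_top _ _), measure_univ,
        hIic, if_pos ht0]
      have h1 : ENNReal.ofReal (1 - Real.exp (-t)) + ENNReal.ofReal (Real.exp (-t)) = 1 := by
        rw [← ENNReal.ofReal_add (by linarith) hpr0.le]
        norm_num
      rw [← h1, ENNReal.add_sub_cancel_left ENNReal.ofReal_ne_top]
    have hterm : ∀ k ∈ Finset.range (ℓ+1), (n.choose k) • (P^k * Q^(n-k)) =
        ENNReal.ofReal ((n.choose k : ℝ) * Real.exp (-t)^k * (1 - Real.exp (-t))^(n-k)) := by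
      intro k _
      rw [hPval, hQval, ← ENNReal.ofReal_pow hpr0.le, ← ENNReal.ofReal_pow (by linarith),
        ← ENNReal.ofReal_mul (by positivity), nsmul_eq_mul,
        ← ENNReal.ofReal_natCast (n.choose k), ← ENNReal.ofReal_mul (Nat.cast_nonneg _),
        mul_assoc]
    rw [Finset.sum_congr rfl hterm,
      ← ENNReal.ofReal_sum_of_nonneg (fun k _ =>
        mul_nonneg (mul_nonneg (Nat.cast_nonneg _) (pow_nonneg hpr0.le _))
          (pow_nonneg (by linarith) _))]
    apply ENNReal.ofReal_le_ofReal
    have hcore := core_sum_bound n ℓ hℓ hℓn L hL1 (Real.exp (-t)) hpr_eq hpr1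
    refine hcore.trans ?_
    rw [hLdef, Real.exp_neg, Real.exp_log (by positivity), inv_div]
  · -- t < 0 : Q = 0
    have ht0 : t < 0 := htdef ▸ Real.log_neg hxpos (lt_of_not_ge hx1)
    have hQ0 : Q = 0 := by
      rw [hQ, hIic, if_neg (not_le.mpr ht0), ENNReal.ofReal_zero]
    have : ∑ k ∈ Finset.range (ℓ+1), (n.choose k) • (P^k * Q^(n-k)) = 0 := by
      apply Finset.sum_eq_zero
      intro k hk
      have hk' : k ≤ ℓ := by
        have := Finset.mem_range.mp hk; omega
      rw [hQ0, zero_pow (by omega : n - k ≠ 0), mul_zero, smul_zero]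
    rw [this]
    exact zero_le
end

section
/- Let W₁,...,W_n be random variables and m ∈ {1,...,n}; suppose the signals are X_i = W_i + μ for i in a set H1 of size m and X_i = W_i for i in H0 = H1^c, with μ > 0. Let A and B be real numbers with P[|W_{H0,(ℓ+1)} - A| ≥ Δ] ≤ ε/3 and P[|W_{H1,(k-ℓ)} - B| ≥ Δ] ≤ ε/3, and suppose P[W_{H0,(ℓ+1)} ≤ μ + W_{H1,(k-ℓ)}] ≥ ε, where W_{T,(j)} denotes the j-th largest value in the index set T. Then μ ≥ A - B - 2Δ. -/
open MeasureTheory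

/-- Derandomization for location models: a probability-`ε` crossing of the `(ℓ+1)`-th largest
null and the `μ`-shifted `(k-ℓ)`-th largest signal, combined with concentration of each order
statistic at scale `Δ` around `A` and `B`, yields `μ ≥ A - B - 2Δ`. -/
theorem location_model_signal_lower_bound {Ω : Type*} [MeasurableSpace Ω]
    (P : Measure Ω) [IsProbabilityMeasure P] {n : ℕ}
    (W X : Fin n → Ω → ℝ) (m : ℕ) (hm1 : 1 ≤ m) (hmn : m ≤ n)
    (H1 : Finset (Fin n)) (hH1card : H1.card = m) (μ : ℝ) (hμ : 0 < μ)
    (hXsignal : ∀ i ∈ H1, ∀ ω, X i ω = W i ω + μ)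
    (hXnull : ∀ i ∈ H1ᶜ, ∀ ω, X i ω = W i ω)
    (k ℓ : ℕ) (A B Δ ε : ℝ) (hΔ : 0 ≤ Δ) (hε : 0 < ε)
    (hconc0 : P {ω | Δ ≤ |kthLargest (H1ᶜ.val.map fun i => W i ω) (ℓ + 1) - A|} ≤
      ENNReal.ofReal (ε / 3))
    (hconc1 : P {ω | Δ ≤ |kthLargest (H1.val.map fun i => W i ω) (k - ℓ) - B|} ≤
      ENNReal.ofReal (ε / 3))
    (hcross : ENNReal.ofReal ε ≤
      P {ω | kthLargest (H1ᶜ.val.map fun i => W i ω) (ℓ + 1) ≤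
          μ + kthLargest (H1.val.map fun i => W i ω) (k - ℓ)}) :
    A - B - 2 * Δ ≤ μ := by
  by_contra h
  push_neg at h
  have hsub : {ω | kthLargest (H1ᶜ.val.map fun i => W i ω) (ℓ + 1) ≤
          μ + kthLargest (H1.val.map fun i => W i ω) (k - ℓ)} ⊆
      {ω | Δ ≤ |kthLargest (H1ᶜ.val.map fun i => W i ω) (ℓ + 1) - A|} ∪
      {ω | Δ ≤ |kthLargest (H1.val.map fun i => W i ω) (k - ℓ) - B|} := by
    intro ω hω
    by_contra hb
    simp only [Set.mem_union, Set.mem_setOf_eq, not_or, not_le] at hb hω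
    obtain ⟨h0, h1⟩ := hb
    rw [abs_lt] at h0 h1
    linarith
  have hle : ENNReal.ofReal ε ≤ ENNReal.ofReal (ε / 3) + ENNReal.ofReal (ε / 3) :=
    hcross.trans ((measure_mono hsub).trans
      ((measure_union_le _ _).trans (add_le_add hconc0 hconc1)))
  rw [← ENNReal.ofReal_add (by linarith) (by linarith)] at hle
  have := (ENNReal.ofReal_le_ofReal_iff (by linarith)).mp hle
  linarith
end
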